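/- Let A₁, A₂ be commutative unital *-algebras, with A₁ ⊗ A₂ the algebraic tensor product made into a *-algebra via (x₁⊗x₂)(y₁⊗y₂) = x₁y₁ ⊗ x₂y₂ and (x₁⊗x₂)* = x₁*⊗x₂*. If Hermitian characters separate points of A₁ and of A₂, then the characters of the form z ↦ Σχ₁(aᵢ)χ₂(bᵢ) (for χ₁, χ₂ Hermitian characters of A₁, A₂ and z = Σaᵢ⊗bᵢ) separate points of A₁ ⊗ A₂. -/

import Mathlib

open scoped TensorProduct

/-- if Hermitian characters separate points of `A₁` and of `A₂`, then the
characters `J(χ₁, χ₂) : a ⊗ b ↦ χ₁(a) χ₂(b)` separate points of the tensor product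
algebra `A₁ ⊗ A₂`. -/
theorem tensorProduct_characters_separate {A₁ A₂ : Type*}
    [CommRing A₁] [CommRing A₂] [Algebra ℂ A₁] [Algebra ℂ A₂]
    [StarRing A₁] [StarRing A₂] [StarModule ℂ A₁] [StarModule ℂ A₂]
    (h1 : ∀ x : A₁, x ≠ 0 → ∃ χ : A₁ →⋆ₐ[ℂ] ℂ, χ x ≠ 0)
    (h2 : ∀ x : A₂, x ≠ 0 → ∃ χ : A₂ →⋆ₐ[ℂ] ℂ, χ x ≠ 0) :
    ∀ z : A₁ ⊗[ℂ] A₂, z ≠ 0 →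
      ∃ (χ₁ : A₁ →⋆ₐ[ℂ] ℂ) (χ₂ : A₂ →⋆ₐ[ℂ] ℂ),
        Algebra.TensorProduct.lift χ₁.toAlgHom χ₂.toAlgHom
          (fun a b => Commute.all (χ₁.toAlgHom a) (χ₂.toAlgHom b)) z ≠ 0 := by
  intro z hz
  classical
  set b := Module.Basis.ofVectorSpace ℂ A₂ with hb
  set e : A₁ ⊗[ℂ] A₂ ≃ₗ[ℂ] (_ →₀ A₁) :=
    (TensorProduct.congr (LinearEquiv.refl ℂ A₁) b.repr).trans
      (TensorProduct.finsuppScalarRight ℂ ℂ A₁ _) with he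
  have hez : e z ≠ 0 := by
    simpa using e.map_ne_zero_iff.mpr hz
  obtain ⟨i, hi⟩ := Finsupp.ne_iff.mp hez
  simp only [Finsupp.coe_zero, Pi.zero_apply] at hi
  obtain ⟨χ₁, hχ₁⟩ := h1 (e z i) hi
  set L : A₁ ⊗[ℂ] A₂ →ₗ[ℂ] A₂ :=
    (TensorProduct.lid ℂ A₂).toLinearMap ∘ₗ
      TensorProduct.map χ₁.toAlgHom.toLinearMap LinearMap.id with hL
  have key : b.repr (L z) i = χ₁ (e z i) := by
    have heq : (Finsupp.lapply i ∘ₗ b.repr.toLinearMap ∘ₗ L : A₁ ⊗[ℂ] A₂ →ₗ[ℂ] ℂ)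
        = (χ₁.toAlgHom.toLinearMap ∘ₗ Finsupp.lapply i ∘ₗ e.toLinearMap) := by
      apply TensorProduct.ext'
      intro a y
      simp only [hL, he, LinearMap.coe_comp, Function.comp_apply,
        TensorProduct.map_tmul, LinearMap.id_coe, id_eq, TensorProduct.lid_tmul,
        LinearEquiv.coe_coe, LinearEquiv.trans_apply, TensorProduct.congr_tmul,
        LinearEquiv.refl_apply, TensorProduct.finsuppScalarRight_apply_tmul,
        Finsupp.lapply_apply, AlgHomClass.commutes, Algebra.algebraMap_self,
        RingHom.id_apply, map_smul, Finsupp.sum_apply, Finsupp.smul_apply]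
      simp only [Finsupp.single_apply, Finsupp.sum_ite_eq']
      by_cases hmem : i ∈ (b.repr y).support
      · simp [hmem, map_smul, smul_eq_mul, mul_comm]
      · simp [Finsupp.notMem_support_iff.mp hmem, hmem]
    exact DFunLike.congr_fun heq z
  have hLz : L z ≠ 0 := by
    intro h
    rw [h] at key
    simp at key
    exact hχ₁ key.symm
  obtain ⟨χ₂, hχ₂⟩ := h2 (L z) hLz
  refine ⟨χ₁, χ₂, ?_⟩
  have heq2 : ((Algebra.TensorProduct.lift χ₁.toAlgHom χ₂.toAlgHom
        (fun a b => Commute.all (χ₁.toAlgHom a) (χ₂.toAlgHom b))).toLinearMap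
        : A₁ ⊗[ℂ] A₂ →ₗ[ℂ] ℂ)
      = χ₂.toAlgHom.toLinearMap ∘ₗ L := by
    apply TensorProduct.ext'
    intro a y
    simp [hL, Algebra.smul_def, AlgHomClass.commutes]
  have : (Algebra.TensorProduct.lift χ₁.toAlgHom χ₂.toAlgHom
      (fun a b => Commute.all (χ₁.toAlgHom a) (χ₂.toAlgHom b))) z = χ₂ (L z) :=
    DFunLike.congr_fun heq2 z
  rw [this]
  exact hχ₂
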